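/- arXiv:2010.00574 — 2 statements merged into one kernel-verified Lean document; each statement's English description precedes it below -/
import Mathlib

section
/- Let $X$ be a probability space, $K$ a compact Hausdorff group equipped with its Baire $\sigma$-algebra and Haar probability measure, and let $f : X \times K \to \mathbb{C}$ be square-integrable with respect to the product measure. Suppose that for every $k_0 \in K$, the function $(x,k) \mapsto f(x, k k_0^{-1})$ agrees with $f$ almost everywhere (where the null set may depend on $k_0$). Then $f$ agrees almost everywhere with the function $(x,k) \mapsto \int_K f(x,k')\, d\mathrm{Haar}_K(k')$; in particular, the equivalence class of $f$ in $L^2(X \times K)$ arises from an element of $L^2(X)$. -/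
open MeasureTheory
open scoped ENNReal NNReal

set_option linter.unusedSectionVars false
set_option maxHeartbeats 1000000

lemma measurable_of_continuous_prod_compact {K L : Type*}
    [TopologicalSpace K] [CompactSpace K] [T2Space K] [MeasurableSpace K] [BorelSpace K]
    [TopologicalSpace L] [CompactSpace L] [T2Space L] [MeasurableSpace L] [BorelSpace L]
    {F : K × L → ℝ} (hF : Continuous F) : Measurable F := by
  classical
  set S : Set C(K × L, ℝ) :=
    Set.range (fun φ : C(K, ℝ) => φ.comp ⟨Prod.fst, continuous_fst⟩) ∪
    Set.range (fun φ : C(L, ℝ) => φ.comp ⟨Prod.snd, continuous_snd⟩) with hS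
  have hsep : (Algebra.adjoin ℝ S).SeparatesPoints := by
    rintro ⟨a, b⟩ ⟨c, d⟩ hne
    by_cases hac : a = c
    · have hbd : b ≠ d := by
        intro h; exact hne (by rw [hac, h])
      obtain ⟨φ, hφ0, hφ1, -⟩ := exists_continuous_zero_one_of_isClosed
        (isClosed_singleton (x := b)) (isClosed_singleton (x := d))
        (by simpa using hbd)
      refine ⟨_, ⟨(φ.comp ⟨Prod.snd, continuous_snd⟩ : C(K × L, ℝ)),
        Algebra.subset_adjoin (Or.inr ⟨φ, rfl⟩), rfl⟩, ?_⟩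
      have h0 : φ b = 0 := hφ0 rfl
      have h1 : φ d = 1 := hφ1 rfl
      simp [h0, h1]
    · obtain ⟨φ, hφ0, hφ1, -⟩ := exists_continuous_zero_one_of_isClosed
        (isClosed_singleton (x := a)) (isClosed_singleton (x := c))
        (by simpa using hac)
      refine ⟨_, ⟨(φ.comp ⟨Prod.fst, continuous_fst⟩ : C(K × L, ℝ)),
        Algebra.subset_adjoin (Or.inl ⟨φ, rfl⟩), rfl⟩, ?_⟩
      have h0 : φ a = 0 := hφ0 rfl
      have h1 : φ c = 1 := hφ1 rfl
      simp [h0, h1]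
  have hmeas : ∀ a : C(K × L, ℝ), a ∈ Algebra.adjoin ℝ S → Measurable ⇑a := by
    intro a ha
    refine Algebra.adjoin_induction (p := fun (x : C(K × L, ℝ)) _ => Measurable ⇑x)
      ?_ ?_ ?_ ?_ ha
    · rintro x (⟨φ, rfl⟩ | ⟨φ, rfl⟩)
      · exact (φ.continuous.measurable).comp measurable_fst
      · exact (φ.continuous.measurable).comp measurable_snd
    · intro r
      exact measurable_const
    · intro x y _ _ hx hy
      exact hx.add hy
    · intro x y _ _ hx hy
      exact hx.mul hy
  have key : ∀ n : ℕ, ∃ a : C(K × L, ℝ), Measurable ⇑a ∧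
      ‖a - (⟨F, hF⟩ : C(K × L, ℝ))‖ < 1 / (n + 1) := by
    intro n
    obtain ⟨⟨a, ha⟩, hlt⟩ :=
      ContinuousMap.exists_mem_subalgebra_near_continuousMap_of_separatesPoints
        (Algebra.adjoin ℝ S) hsep ⟨F, hF⟩ (1 / (n + 1)) (by positivity)
    exact ⟨a, hmeas a ha, hlt⟩
  choose a hameas hlt using key
  refine measurable_of_tendsto_metrizable hameas ?_
  rw [tendsto_pi_nhds]
  intro q
  rw [tendsto_iff_dist_tendsto_zero]
  apply squeeze_zero (fun n => dist_nonneg) (fun n => ?_)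
    tendsto_one_div_add_atTop_nhds_zero_nat
  have := ContinuousMap.norm_coe_le_norm (a n - (⟨F, hF⟩ : C(K × L, ℝ))) q
  rw [dist_eq_norm]
  simpa using this.trans (hlt n).le

section CplxAux

variable {K L : Type*}
    [TopologicalSpace K] [CompactSpace K] [T2Space K] [MeasurableSpace K] [BorelSpace K]
    [TopologicalSpace L] [CompactSpace L] [T2Space L] [MeasurableSpace L] [BorelSpace L]

lemma measurable_of_continuous_prod_compact_cplx
    {F : K × L → ℂ} (hF : Continuous F) : Measurable F := by
  have hre : Measurable fun q : K × L => (F q).re :=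
    measurable_of_continuous_prod_compact (Complex.continuous_re.comp hF)
  have him : Measurable fun q : K × L => (F q).im :=
    measurable_of_continuous_prod_compact (Complex.continuous_im.comp hF)
  have : F = fun q => ((F q).re : ℂ) + ((F q).im : ℂ) * Complex.I := by
    funext q; simp [Complex.re_add_im]
  rw [this]
  exact (Complex.measurable_ofReal.comp hre).add
    ((Complex.measurable_ofReal.comp him).mul_const Complex.I)

end CplxAux

section GoodClass

variable {X K : Type*} [MeasurableSpace X]
    [Group K] [TopologicalSpace K] [IsTopologicalGroup K] [CompactSpace K] [T2Space K]
    [MeasurableSpace K] [BorelSpace K]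

/-- the class of nice approximants -/
def Stmt4Good (h : X × K → ℂ) : Prop :=
  Measurable h ∧ (∃ C : ℝ, ∀ p, ‖h p‖ ≤ C) ∧
  Measurable (fun q : (X × K) × K => h (q.1.1, q.1.2 * q.2⁻¹)) ∧
  ∀ x : X, Continuous fun k => h (x, k)

lemma stmt4Good_const (c : ℂ) : Stmt4Good (fun _ : X × K => c) :=
  ⟨measurable_const, ⟨‖c‖, fun _ => le_rfl⟩, measurable_const, fun _ => continuous_const⟩

lemma Stmt4Good.add {h₁ h₂ : X × K → ℂ} (H₁ : Stmt4Good h₁) (H₂ : Stmt4Good h₂) :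
    Stmt4Good (fun p => h₁ p + h₂ p) := by
  obtain ⟨m₁, ⟨C₁, hC₁⟩, j₁, c₁⟩ := H₁
  obtain ⟨m₂, ⟨C₂, hC₂⟩, j₂, c₂⟩ := H₂
  exact ⟨m₁.add m₂, ⟨C₁ + C₂, fun p => (norm_add_le _ _).trans (add_le_add (hC₁ p) (hC₂ p))⟩,
    j₁.add j₂, fun x => (c₁ x).add (c₂ x)⟩

lemma Stmt4Good.smul {h : X × K → ℂ} (c : ℂ) (H : Stmt4Good h) :
    Stmt4Good (fun p => c * h p) := by
  obtain ⟨m, ⟨C, hC⟩, j, co⟩ := H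
  refine ⟨measurable_const.mul m, ⟨‖c‖ * C, fun p => ?_⟩, measurable_const.mul j,
    fun x => continuous_const.mul (co x)⟩
  rw [norm_mul]
  exact mul_le_mul_of_nonneg_left (hC p) (norm_nonneg c)

lemma stmt4Good_basic {A : Set X} (hA : MeasurableSet A) (ψ : C(K, ℂ)) :
    Stmt4Good (fun p : X × K => A.indicator (fun _ => (1 : ℂ)) p.1 * ψ p.2) := by
  have hind : Measurable (A.indicator (fun _ => (1 : ℂ))) :=
    measurable_const.indicator hA
  have hψm : Measurable (⇑ψ) := ψ.continuous.measurable
  refine ⟨(hind.comp measurable_fst).mul (hψm.comp measurable_snd),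
    ⟨‖ψ‖, fun p => ?_⟩, ?_, fun x => show Continuous fun k => A.indicator (fun _ => (1:ℂ)) x * ψ k from continuous_const.mul ψ.continuous⟩
  · rw [norm_mul]
    have h1 : ‖A.indicator (fun _ => (1 : ℂ)) p.1‖ ≤ 1 := by
      by_cases h : p.1 ∈ A <;> simp [Set.indicator_of_mem, Set.indicator_of_notMem, h]
    calc ‖A.indicator (fun _ => (1:ℂ)) p.1‖ * ‖ψ p.2‖
        ≤ 1 * ‖ψ p.2‖ := mul_le_mul_of_nonneg_right h1 (norm_nonneg _)
      _ = ‖ψ p.2‖ := one_mul _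
      _ ≤ ‖ψ‖ := ψ.norm_coe_le_norm p.2
  · have hmul : Measurable fun q : K × K => ψ (q.1 * q.2⁻¹) :=
      measurable_of_continuous_prod_compact_cplx
        (ψ.continuous.comp (continuous_fst.mul continuous_snd.inv))
    exact ((hind.comp (measurable_fst.comp measurable_fst)).mul
      (hmul.comp ((measurable_snd.comp measurable_fst).prodMk measurable_snd)))

lemma stmt4Good_sum {ι : Type*} (s : Finset ι) (h : ι → X × K → ℂ)
    (H : ∀ i ∈ s, Stmt4Good (h i)) : Stmt4Good (fun p => ∑ i ∈ s, h i p) := by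
  classical
  induction s using Finset.induction with
  | empty => simpa using stmt4Good_const (0 : ℂ)
  | insert i s hnotmem ih =>
    simp only [Finset.sum_insert hnotmem]
    exact (H i (Finset.mem_insert_self i s)).add
      (ih fun j hj => H j (Finset.mem_insert_of_mem hj))

lemma Stmt4Good.measurable {h : X × K → ℂ} (H : Stmt4Good h) : Measurable h := H.1

lemma stmt4_approx_set (μX : Measure X) [IsProbabilityMeasure μX]
    (μK : Measure K) [IsProbabilityMeasure μK] [μK.IsHaarMeasure] :
    ∀ ⦃E : Set (X × K)⦄, MeasurableSet E → ∀ ε : ℝ≥0∞, ε ≠ 0 →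
    ∃ h, Stmt4Good h ∧
      ∫⁻ p, ‖E.indicator (fun _ => (1:ℂ)) p - h p‖₊ ∂(μX.prod μK) ≤ ε := by
  set μ := μX.prod μK with hμdef
  set C : Set (X × K) → Prop := fun E => ∀ ε : ℝ≥0∞, ε ≠ 0 →
    ∃ h, Stmt4Good h ∧
      ∫⁻ p, ‖E.indicator (fun _ => (1:ℂ)) p - h p‖₊ ∂μ ≤ ε with hCdef
  -- generic triangle estimate
  have htri : ∀ (u v : Set (X × K)) (h : X × K → ℂ), MeasurableSet u → MeasurableSet v →
      Measurable h →
      ∫⁻ p, ‖u.indicator (fun _ => (1:ℂ)) p - h p‖₊ ∂μ ≤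
        (∫⁻ p, ‖u.indicator (fun _ => (1:ℂ)) p - v.indicator (fun _ => (1:ℂ)) p‖₊ ∂μ) +
        ∫⁻ p, ‖v.indicator (fun _ => (1:ℂ)) p - h p‖₊ ∂μ := by
    intro u v h hu hv hh
    have hpt : ∀ p, (‖u.indicator (fun _ => (1:ℂ)) p - h p‖₊ : ℝ≥0∞)
        ≤ (‖u.indicator (fun _ => (1:ℂ)) p - v.indicator (fun _ => (1:ℂ)) p‖₊ : ℝ≥0∞)
          + ‖v.indicator (fun _ => (1:ℂ)) p - h p‖₊ := by
      intro p
      have : u.indicator (fun _ => (1:ℂ)) p - h p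
          = (u.indicator (fun _ => (1:ℂ)) p - v.indicator (fun _ => (1:ℂ)) p)
            + (v.indicator (fun _ => (1:ℂ)) p - h p) := by ring
      rw [this]
      exact_mod_cast ENNReal.coe_le_coe.2 (nnnorm_add_le _ _)
    calc ∫⁻ p, (‖u.indicator (fun _ => (1:ℂ)) p - h p‖₊ : ℝ≥0∞) ∂μ
        ≤ ∫⁻ p, ((‖u.indicator (fun _ => (1:ℂ)) p - v.indicator (fun _ => (1:ℂ)) p‖₊ : ℝ≥0∞)
            + ‖v.indicator (fun _ => (1:ℂ)) p - h p‖₊) ∂μ := lintegral_mono hpt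
      _ = _ := lintegral_add_left
          (((measurable_const.indicator hu).sub (measurable_const.indicator hv)).nnnorm.coe_nnreal_ennreal) _
  have hCempty : C ∅ := by
    intro ε hε
    refine ⟨fun _ => 0, stmt4Good_const 0, ?_⟩
    simp
  -- closure under disjoint binary unions
  have hCunion2 : ∀ s t : Set (X × K), MeasurableSet s → MeasurableSet t → Disjoint s t →
      C s → C t → C (s ∪ t) := by
    intro s t hsm htm hdisj hs ht ε hε
    obtain ⟨h₁, hg₁, he₁⟩ := hs (ε / 2) (ENNReal.half_pos hε).ne'
    obtain ⟨h₂, hg₂, he₂⟩ := ht (ε / 2) (ENNReal.half_pos hε).ne'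
    refine ⟨fun p => h₁ p + h₂ p, hg₁.add hg₂, ?_⟩
    have hpt : ∀ p, (‖(s ∪ t).indicator (fun _ => (1:ℂ)) p - (h₁ p + h₂ p)‖₊ : ℝ≥0∞)
        ≤ (‖s.indicator (fun _ => (1:ℂ)) p - h₁ p‖₊ : ℝ≥0∞)
          + ‖t.indicator (fun _ => (1:ℂ)) p - h₂ p‖₊ := by
      intro p
      rw [Set.indicator_union_of_disjoint hdisj]
      have : (fun a => s.indicator (fun _ => (1:ℂ)) a + t.indicator (fun _ => (1:ℂ)) a) p
          - (h₁ p + h₂ p)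
          = (s.indicator (fun _ => (1:ℂ)) p - h₁ p)
            + (t.indicator (fun _ => (1:ℂ)) p - h₂ p) := by
        simp only []; ring
      rw [this]
      exact_mod_cast ENNReal.coe_le_coe.2 (nnnorm_add_le _ _)
    calc ∫⁻ p, ‖(s ∪ t).indicator (fun _ => (1:ℂ)) p - (h₁ p + h₂ p)‖₊ ∂μ
        ≤ ∫⁻ p, ((‖s.indicator (fun _ => (1:ℂ)) p - h₁ p‖₊ : ℝ≥0∞)
            + ‖t.indicator (fun _ => (1:ℂ)) p - h₂ p‖₊) ∂μ := lintegral_mono hpt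
      _ = ∫⁻ p, (‖s.indicator (fun _ => (1:ℂ)) p - h₁ p‖₊ : ℝ≥0∞) ∂μ
            + ∫⁻ p, (‖t.indicator (fun _ => (1:ℂ)) p - h₂ p‖₊ : ℝ≥0∞) ∂μ :=
          lintegral_add_left
            (((measurable_const.indicator hsm).sub hg₁.measurable).nnnorm.coe_nnreal_ennreal) _
      _ ≤ ε / 2 + ε / 2 := add_le_add he₁ he₂
      _ = ε := ENNReal.add_halves ε
  refine MeasurableSpace.induction_on_inter generateFrom_prod.symm isPiSystem_prod hCempty
    ?_ ?_ ?_
  · -- rectangles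
    rintro t ⟨A, hA, B, hB, rfl⟩
    intro ε hε
    simp only [Set.mem_setOf_eq] at hA hB
    have hBmem : MemLp (B.indicator (fun _ => (1:ℂ))) 1 μK :=
      memLp_one_iff_integrable.2 ((integrable_const (1:ℂ)).indicator hB)
    obtain ⟨ψb, hψ, -⟩ := hBmem.exists_boundedContinuous_eLpNorm_sub_le
      (by norm_num : (1:ℝ≥0∞) ≠ ∞) hε
    set ψ : C(K, ℂ) := ψb.toContinuousMap with hψdef
    refine ⟨_, stmt4Good_basic hA ψ, ?_⟩
    have hpt : ∀ p : X × K,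
        (‖(A ×ˢ B).indicator (fun _ => (1:ℂ)) p
          - A.indicator (fun _ => (1:ℂ)) p.1 * ψ p.2‖₊ : ℝ≥0∞)
        ≤ ‖B.indicator (fun _ => (1:ℂ)) p.2 - ψ p.2‖₊ := by
      intro p
      by_cases hp : p.1 ∈ A
      · have h1 : (A ×ˢ B).indicator (fun _ => (1:ℂ)) p
            = B.indicator (fun _ => (1:ℂ)) p.2 := by
          by_cases hq : p.2 ∈ B <;>
            simp [Set.indicator, Set.mem_prod, hp, hq]
        rw [h1, Set.indicator_of_mem hp, one_mul]
      · have h1 : (A ×ˢ B).indicator (fun _ => (1:ℂ)) p = 0 := by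
          simp [Set.indicator, Set.mem_prod, hp]
        rw [h1, Set.indicator_of_notMem hp, zero_mul, sub_zero]
        simp
    have hsnd : MeasurePreserving (Prod.snd : X × K → K) μ μK :=
      ⟨measurable_snd, by rw [hμdef, Measure.map_snd_prod]; simp⟩
    calc ∫⁻ p, ‖(A ×ˢ B).indicator (fun _ => (1:ℂ)) p
            - A.indicator (fun _ => (1:ℂ)) p.1 * ψ p.2‖₊ ∂μ
        ≤ ∫⁻ p, (‖B.indicator (fun _ => (1:ℂ)) p.2 - ψ p.2‖₊ : ℝ≥0∞) ∂μ :=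
          lintegral_mono hpt
      _ = ∫⁻ k, (‖B.indicator (fun _ => (1:ℂ)) k - ψ k‖₊ : ℝ≥0∞) ∂μK :=
          hsnd.lintegral_comp
            (((measurable_const.indicator hB).sub ψ.continuous.measurable).nnnorm.coe_nnreal_ennreal)
      _ = eLpNorm (B.indicator (fun _ => (1:ℂ)) - ⇑ψb) 1 μK := by
          rw [eLpNorm_one_eq_lintegral_enorm]
          rfl
      _ ≤ ε := hψ
  · -- complement
    intro t htm hCt ε hε
    obtain ⟨h, hg, herr⟩ := hCt ε hε
    have hgood : Stmt4Good (fun p : X × K => 1 - h p) := by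
      have := (stmt4Good_const (1:ℂ)).add (hg.smul (-1))
      have heq : (fun p : X × K => (1:ℂ) + (-1) * h p) = fun p => 1 - h p := by
        funext p; ring
      rwa [heq] at this
    refine ⟨fun p => 1 - h p, hgood, ?_⟩
    have hpt : ∀ p, (‖tᶜ.indicator (fun _ => (1:ℂ)) p - (1 - h p)‖₊ : ℝ≥0∞)
        = ‖t.indicator (fun _ => (1:ℂ)) p - h p‖₊ := by
      intro p
      have h1 : tᶜ.indicator (fun _ => (1:ℂ)) p = 1 - t.indicator (fun _ => (1:ℂ)) p := by
        by_cases hp : p ∈ t <;> simp [Set.indicator, hp]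
      rw [h1]
      have : 1 - t.indicator (fun _ => (1:ℂ)) p - (1 - h p)
          = -(t.indicator (fun _ => (1:ℂ)) p - h p) := by ring
      rw [this, nnnorm_neg]
    calc ∫⁻ p, ‖tᶜ.indicator (fun _ => (1:ℂ)) p - (1 - h p)‖₊ ∂μ
        = ∫⁻ p, (‖t.indicator (fun _ => (1:ℂ)) p - h p‖₊ : ℝ≥0∞) ∂μ :=
          lintegral_congr hpt
      _ ≤ ε := herr
  · -- countable disjoint unions
    intro fs hdisj hfm hCf ε hε
    set U : Set (X × K) := ⋃ i, fs i with hUdef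
    set V : ℕ → Set (X × K) := fun N => ⋃ i ∈ Finset.range N, fs i with hVdef
    have hVm : ∀ N, MeasurableSet (V N) := fun N =>
      Finset.measurableSet_biUnion _ (fun i _ => hfm i)
    have hVC : ∀ N, C (V N) := by
      intro N
      induction N with
      | zero => simpa [hVdef] using hCempty
      | succ n ih =>
        have hVsucc : V (n + 1) = V n ∪ fs n := by
          rw [hVdef]
          simp only [Finset.range_add_one, Finset.set_biUnion_insert]
          rw [Set.union_comm]
        rw [hVsucc]
        refine hCunion2 _ _ (hVm n) (hfm n) ?_ ih (hCf n)
        rw [Set.disjoint_left]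
        rintro p hp hpn
        simp only [hVdef, Set.mem_iUnion, Finset.mem_range] at hp
        obtain ⟨i, hiN, hpi⟩ := hp
        exact Set.disjoint_left.1 (hdisj (Nat.ne_of_lt hiN)) hpi hpn
    -- tail estimate
    have hUmeas : MeasurableSet U := MeasurableSet.iUnion hfm
    have hsum_ne_top : ∑' i, μ (fs i) ≠ ⊤ := by
      rw [← measure_iUnion hdisj hfm]
      exact (measure_lt_top μ _).ne
    have htail : Filter.Tendsto (fun N => ∑' i, μ (fs (i + N))) Filter.atTop (nhds 0) :=
      ENNReal.tendsto_sum_nat_add _ hsum_ne_top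
    have hhalf : (0 : ℝ≥0∞) < ε / 2 := ENNReal.half_pos hε
    obtain ⟨N, hN⟩ := (htail.eventually_lt_const hhalf).exists
    obtain ⟨h, hg, herr⟩ := hVC N (ε / 2) hhalf.ne'
    refine ⟨h, hg, ?_⟩
    have hdiff : ∫⁻ p, ‖U.indicator (fun _ => (1:ℂ)) p
        - (V N).indicator (fun _ => (1:ℂ)) p‖₊ ∂μ ≤ ε / 2 := by
      have hsub : V N ⊆ U := by
        intro p hp
        simp only [hVdef, Set.mem_iUnion, Finset.mem_range] at hp
        obtain ⟨i, _, hpi⟩ := hp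
        exact Set.mem_iUnion.2 ⟨i, hpi⟩
      have hpt : ∀ p, (‖U.indicator (fun _ => (1:ℂ)) p
          - (V N).indicator (fun _ => (1:ℂ)) p‖₊ : ℝ≥0∞)
          ≤ (U \ V N).indicator (fun _ => (1:ℝ≥0∞)) p := by
        intro p
        by_cases hpV : p ∈ V N
        · rw [Set.indicator_of_mem hpV, Set.indicator_of_mem (hsub hpV),
            Set.indicator_of_notMem (by simp [hpV] : p ∉ U \ V N)]
          simp
        · by_cases hpU : p ∈ U
          · rw [Set.indicator_of_mem hpU, Set.indicator_of_notMem hpV,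
              Set.indicator_of_mem (Set.mem_diff_of_mem hpU hpV)]
            simp
          · rw [Set.indicator_of_notMem hpU, Set.indicator_of_notMem hpV,
              Set.indicator_of_notMem (by simp [hpU] : p ∉ U \ V N)]
            simp
      have hμdiff : μ (U \ V N) ≤ ∑' i, μ (fs (i + N)) := by
        have hsub2 : U \ V N ⊆ ⋃ i, fs (i + N) := by
          rintro p ⟨hpU, hpV⟩
          obtain ⟨j, hpj⟩ := Set.mem_iUnion.1 hpU
          have hjN : N ≤ j := by
            by_contra hjN
            exact hpV (by
              simp only [hVdef, Set.mem_iUnion, Finset.mem_range]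
              exact ⟨j, Nat.lt_of_not_le hjN, hpj⟩)
          refine Set.mem_iUnion.2 ⟨j - N, ?_⟩
          rwa [Nat.sub_add_cancel hjN]
        exact (measure_mono hsub2).trans (measure_iUnion_le _)
      calc ∫⁻ p, ‖U.indicator (fun _ => (1:ℂ)) p
            - (V N).indicator (fun _ => (1:ℂ)) p‖₊ ∂μ
          ≤ ∫⁻ p, (U \ V N).indicator (fun _ => (1:ℝ≥0∞)) p ∂μ := lintegral_mono hpt
        _ = μ (U \ V N) := by
            rw [lintegral_indicator (hUmeas.diff (hVm N))]
            simp
        _ ≤ ∑' i, μ (fs (i + N)) := hμdiff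
        _ ≤ ε / 2 := hN.le
    calc ∫⁻ p, ‖U.indicator (fun _ => (1:ℂ)) p - h p‖₊ ∂μ
        ≤ (∫⁻ p, ‖U.indicator (fun _ => (1:ℂ)) p
            - (V N).indicator (fun _ => (1:ℂ)) p‖₊ ∂μ)
          + ∫⁻ p, ‖(V N).indicator (fun _ => (1:ℂ)) p - h p‖₊ ∂μ :=
          htri U (V N) h hUmeas (hVm N) hg.measurable
      _ ≤ ε / 2 + ε / 2 := add_le_add hdiff herr
      _ = ε := ENNReal.add_halves ε

lemma stmt4_approx_fun (μX : Measure X) [IsProbabilityMeasure μX]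
    (μK : Measure K) [IsProbabilityMeasure μK] [μK.IsHaarMeasure]
    {g : X × K → ℂ} (hgi : Integrable g (μX.prod μK)) :
    ∀ ε : ℝ≥0∞, ε ≠ 0 → ∃ h, Stmt4Good h ∧
      ∫⁻ p, ‖g p - h p‖₊ ∂(μX.prod μK) ≤ ε := by
  set μ := μX.prod μK with hμdef
  -- approximation of simple functions
  have hsimple : ∀ s : SimpleFunc (X × K) ℂ, ∀ ε : ℝ≥0∞, ε ≠ 0 →
      ∃ h, Stmt4Good h ∧ ∫⁻ p, ‖s p - h p‖₊ ∂μ ≤ ε := by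
    intro s
    induction s using SimpleFunc.induction with
    | @const c t ht =>
      intro ε hε
      by_cases hc : c = 0
      · refine ⟨fun _ => 0, stmt4Good_const 0, ?_⟩
        simp [hc, SimpleFunc.piecewise_apply]
      · have hnorm : (‖c‖₊ : ℝ≥0∞) ≠ 0 := by simpa using hc
        have hδ : ε / (‖c‖₊ : ℝ≥0∞) ≠ 0 :=
          (ENNReal.div_pos hε ENNReal.coe_ne_top).ne'
        obtain ⟨h₀, hg₀, herr₀⟩ := stmt4_approx_set μX μK ht _ hδ
        refine ⟨fun p => c * h₀ p, hg₀.smul c, ?_⟩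
        have hpt : ∀ p, (‖(SimpleFunc.piecewise t ht (SimpleFunc.const _ c)
            (SimpleFunc.const _ 0)) p - c * h₀ p‖₊ : ℝ≥0∞)
            = ‖c‖₊ * ‖t.indicator (fun _ => (1:ℂ)) p - h₀ p‖₊ := by
          intro p
          have h1 : (SimpleFunc.piecewise t ht (SimpleFunc.const _ c)
              (SimpleFunc.const _ 0)) p = c * t.indicator (fun _ => (1:ℂ)) p := by
            rw [SimpleFunc.piecewise_apply]
            by_cases hp : p ∈ t <;> simp [Set.indicator, hp]
          rw [h1]
          have h2 : c * t.indicator (fun _ => (1:ℂ)) p - c * h₀ p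
              = c * (t.indicator (fun _ => (1:ℂ)) p - h₀ p) := by ring
          rw [h2, nnnorm_mul, ENNReal.coe_mul]
        calc ∫⁻ p, ‖(SimpleFunc.piecewise t ht (SimpleFunc.const _ c)
              (SimpleFunc.const _ 0)) p - c * h₀ p‖₊ ∂μ
            = ∫⁻ p, (‖c‖₊ : ℝ≥0∞) * ‖t.indicator (fun _ => (1:ℂ)) p - h₀ p‖₊ ∂μ :=
              lintegral_congr hpt
          _ = (‖c‖₊ : ℝ≥0∞) * ∫⁻ p, (‖t.indicator (fun _ => (1:ℂ)) p - h₀ p‖₊ : ℝ≥0∞) ∂μ :=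
              lintegral_const_mul _
                (((measurable_const.indicator ht).sub hg₀.measurable).nnnorm.coe_nnreal_ennreal)
          _ ≤ (‖c‖₊ : ℝ≥0∞) * (ε / (‖c‖₊ : ℝ≥0∞)) :=
              mul_le_mul_right herr₀ _
          _ ≤ ε := ENNReal.mul_div_le
    | @add s₁ s₂ _ ih₁ ih₂ =>
      intro ε hε
      obtain ⟨h₁, hg₁, he₁⟩ := ih₁ (ε / 2) (ENNReal.half_pos hε).ne'
      obtain ⟨h₂, hg₂, he₂⟩ := ih₂ (ε / 2) (ENNReal.half_pos hε).ne'
      refine ⟨fun p => h₁ p + h₂ p, hg₁.add hg₂, ?_⟩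
      have hpt : ∀ p, (‖(s₁ + s₂) p - (h₁ p + h₂ p)‖₊ : ℝ≥0∞)
          ≤ (‖s₁ p - h₁ p‖₊ : ℝ≥0∞) + ‖s₂ p - h₂ p‖₊ := by
        intro p
        have : (s₁ + s₂) p - (h₁ p + h₂ p) = (s₁ p - h₁ p) + (s₂ p - h₂ p) := by
          simp [SimpleFunc.coe_add]; ring
        rw [this]
        exact_mod_cast ENNReal.coe_le_coe.2 (nnnorm_add_le _ _)
      calc ∫⁻ p, ‖(s₁ + s₂) p - (h₁ p + h₂ p)‖₊ ∂μ
          ≤ ∫⁻ p, ((‖s₁ p - h₁ p‖₊ : ℝ≥0∞) + ‖s₂ p - h₂ p‖₊) ∂μ := lintegral_mono hpt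
        _ = ∫⁻ p, (‖s₁ p - h₁ p‖₊ : ℝ≥0∞) ∂μ + ∫⁻ p, (‖s₂ p - h₂ p‖₊ : ℝ≥0∞) ∂μ :=
            lintegral_add_left ((s₁.measurable.sub hg₁.measurable).nnnorm.coe_nnreal_ennreal) _
        _ ≤ ε / 2 + ε / 2 := add_le_add he₁ he₂
        _ = ε := ENNReal.add_halves ε
  intro ε hε
  obtain ⟨s, hs, -⟩ := (memLp_one_iff_integrable.2 hgi).exists_simpleFunc_eLpNorm_sub_lt
    (by norm_num : (1:ℝ≥0∞) ≠ ∞) (ENNReal.half_pos hε).ne'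
  obtain ⟨h, hgood, herr⟩ := hsimple s (ε / 2) (ENNReal.half_pos hε).ne'
  refine ⟨h, hgood, ?_⟩
  have h1 : ∫⁻ p, ‖g p - s p‖₊ ∂μ ≤ ε / 2 := by
    have : eLpNorm (g - ⇑s) 1 μ = ∫⁻ p, ‖g p - s p‖₊ ∂μ := by
      rw [eLpNorm_one_eq_lintegral_enorm]; rfl
    rw [← this]
    exact hs.le
  have hpt : ∀ p, (‖g p - h p‖₊ : ℝ≥0∞) ≤ (‖g p - s p‖₊ : ℝ≥0∞) + ‖s p - h p‖₊ := by
    intro p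
    have : g p - h p = (g p - s p) + (s p - h p) := by ring
    rw [this]
    exact_mod_cast ENNReal.coe_le_coe.2 (nnnorm_add_le _ _)
  calc ∫⁻ p, ‖g p - h p‖₊ ∂μ
      ≤ ∫⁻ p, ((‖g p - s p‖₊ : ℝ≥0∞) + ‖s p - h p‖₊) ∂μ := lintegral_mono hpt
    _ = ∫⁻ p, (‖g p - s p‖₊ : ℝ≥0∞) ∂μ + ∫⁻ p, (‖s p - h p‖₊ : ℝ≥0∞) ∂μ :=
        lintegral_add_right _ ((s.measurable.sub hgood.measurable).nnnorm.coe_nnreal_ennreal)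
    _ ≤ ε / 2 + ε / 2 := add_le_add h1 herr
    _ = ε := ENNReal.add_halves ε

end GoodClass

/-- If `f ∈ L²(X × K)` is invariant under each right translation in the
second (Haar-measured compact group) coordinate, up to null sets depending on the
group element, then `f` agrees a.e. with the fiberwise integral
`(x,k) ↦ ∫ f(x,k') dHaar(k')`; in particular it arises from `L²(X)`. -/
theorem stmt_4 {X K : Type*} [MeasurableSpace X]
    [Group K] [TopologicalSpace K] [IsTopologicalGroup K] [CompactSpace K] [T2Space K]
    [MeasurableSpace K] [BorelSpace K]
    (μX : Measure X) [IsProbabilityMeasure μX]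
    (μK : Measure K) [IsProbabilityMeasure μK] [μK.IsHaarMeasure]
    (f : X × K → ℂ) (hf : MemLp f 2 (μX.prod μK))
    (hinv : ∀ k₀ : K, (fun p : X × K => f (p.1, p.2 * k₀⁻¹)) =ᵐ[μX.prod μK] f) :
    f =ᵐ[μX.prod μK] fun p : X × K => ∫ k', f (p.1, k') ∂μK := by
  -- Haar measure on a compact group is right invariant
  haveI hMR : μK.IsMulRightInvariant := by
    constructor
    intro k
    haveI h2 : IsProbabilityMeasure (Measure.map (· * k) μK) :=
      Measure.isProbabilityMeasure_map (measurable_mul_const k).aemeasurable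
    haveI h3 : (Measure.map (· * k) μK).IsOpenPosMeasure :=
      (continuous_mul_right k).isOpenPosMeasure_map
        (fun y => ⟨y * k⁻¹, by simp⟩)
    haveI h4 : (Measure.map (· * k) μK).IsHaarMeasure :=
      { toIsFiniteMeasureOnCompacts := inferInstance
        toIsMulLeftInvariant := inferInstance
        toIsOpenPosMeasure := h3 }
    exact Measure.isHaarMeasure_eq_of_isProbabilityMeasure _ _
  -- and inversion invariant
  haveI hInv : μK.IsInvInvariant := by
    constructor
    haveI h2 : IsProbabilityMeasure μK.inv :=
      Measure.isProbabilityMeasure_map measurable_inv.aemeasurable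
    haveI h4 : (μK.inv).IsHaarMeasure :=
      { toIsFiniteMeasureOnCompacts := inferInstance
        toIsMulLeftInvariant := inferInstance
        toIsOpenPosMeasure := inferInstance }
    exact Measure.isHaarMeasure_eq_of_isProbabilityMeasure _ _
  set μ := μX.prod μK with hμdef
  -- measurable version of f
  set g : X × K → ℂ := hf.1.mk f with hg_def
  have hgsm : StronglyMeasurable g := hf.1.stronglyMeasurable_mk
  have hfg : f =ᵐ[μ] g := hf.1.ae_eq_mk
  have hgm : Measurable g := hgsm.measurable
  have hgL2 : MemLp g 2 μ := hf.ae_eq hfg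
  have hgi : Integrable g μ :=
    memLp_one_iff_integrable.1 (hgL2.mono_exponent (by norm_num))
  -- transfer invariance to g
  have hinv' : ∀ k₀ : K, (fun p : X × K => g (p.1, p.2 * k₀⁻¹)) =ᵐ[μ] g := by
    intro k₀
    have hT : MeasurePreserving (fun p : X × K => (p.1, p.2 * k₀⁻¹)) μ μ :=
      (MeasurePreserving.id μX).prod (measurePreserving_mul_right μK k₀⁻¹)
    have h1 : (fun p : X × K => f (p.1, p.2 * k₀⁻¹))
        =ᵐ[μ] (fun p : X × K => g (p.1, p.2 * k₀⁻¹)) :=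
      hT.quasiMeasurePreserving.ae_eq hfg
    exact h1.symm.trans ((hinv k₀).trans hfg)
  -- fiberwise average of g
  set G : X → ℂ := fun x => ∫ k', g (x, k') ∂μK with hG_def
  have hGsm : StronglyMeasurable G := hgsm.integral_prod_right'
  have hGm : Measurable (fun p : X × K => G p.1) :=
    hGsm.measurable.comp measurable_fst
  have hfstMP : MeasurePreserving (Prod.fst : X × K → X) μ μX :=
    ⟨measurable_fst, by rw [hμdef, Measure.map_fst_prod]; simp⟩
  -- main quantitative estimate
  set Z : ℝ≥0∞ := ∫⁻ p, ‖g p - G p.1‖₊ ∂μ with hZ_def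
  have hZle : ∀ ε : ℝ≥0∞, ε ≠ 0 → Z ≤ 4 * ε := by
    intro ε hε
    obtain ⟨h, hgood, herr⟩ := stmt4_approx_fun μX μK hgi ε hε
    obtain ⟨hm, ⟨Cb, hCb⟩, hjm, hcont⟩ := hgood
    set δ : ℝ≥0∞ := ∫⁻ p, ‖g p - h p‖₊ ∂μ with hδ_def
    -- the fiberwise average of h
    set Gh : X → ℂ := fun x => ∫ k', h (x, k') ∂μK with hGh_def
    have hGhsm : StronglyMeasurable Gh :=
      hm.stronglyMeasurable.integral_prod_right'
    -- integrability of translates of h in the group variable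
    have hint : ∀ p : X × K, Integrable (fun k₀ => h (p.1, p.2 * k₀⁻¹)) μK := by
      intro p
      have hcont2 : Continuous fun k₀ : K => h (p.1, p.2 * k₀⁻¹) :=
        (hcont p.1).comp (continuous_const.mul continuous_inv)
      exact (integrable_const Cb).mono'
        hcont2.measurable.aestronglyMeasurable
        (Filter.Eventually.of_forall fun k₀ => hCb _)
    -- change of variables: Gh as an average of translates
    have hGh_eq : ∀ p : X × K, Gh p.1 = ∫ k₀, h (p.1, p.2 * k₀⁻¹) ∂μK := by
      intro p
      have h1 : ∫ k₀, h (p.1, p.2 * k₀⁻¹) ∂μK = ∫ k₀, h (p.1, p.2 * k₀) ∂μK :=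
        integral_inv_eq_self (fun u => h (p.1, p.2 * u)) μK
      have h2 : ∫ k₀, h (p.1, p.2 * k₀) ∂μK = ∫ k₀, h (p.1, k₀) ∂μK :=
        integral_mul_left_eq_self (fun u => h (p.1, u)) p.2
      rw [h1, h2]
    -- T2 bound
    have hT2 : ∫⁻ p, ‖h p - Gh p.1‖₊ ∂μ ≤ 2 * δ := by
      have hsub : ∀ p : X × K, h p - Gh p.1
          = ∫ k₀, (h p - h (p.1, p.2 * k₀⁻¹)) ∂μK := by
        intro p
        rw [integral_sub (integrable_const (h p)) (hint p), integral_const]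
        simp [hGh_eq p]
      have hstep1 : ∫⁻ p, ‖h p - Gh p.1‖₊ ∂μ
          ≤ ∫⁻ p, ∫⁻ k₀, ‖h p - h (p.1, p.2 * k₀⁻¹)‖₊ ∂μK ∂μ := by
        refine lintegral_mono fun p => ?_
        rw [hsub p]
        exact enorm_integral_le_lintegral_enorm _
      set D : (X × K) × K → ℝ≥0∞ :=
        fun q => ‖h q.1 - h (q.1.1, q.1.2 * q.2⁻¹)‖₊ with hD_def
      have hDm : Measurable D := ((hm.comp measurable_fst).sub hjm).nnnorm.coe_nnreal_ennreal
      have hswap : ∫⁻ p, ∫⁻ k₀, D (p, k₀) ∂μK ∂μ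
          = ∫⁻ k₀, ∫⁻ p, D (p, k₀) ∂μ ∂μK :=
        lintegral_lintegral_swap hDm.aemeasurable
      have hinner : ∀ k₀ : K, ∫⁻ p, D (p, k₀) ∂μ ≤ 2 * δ := by
        intro k₀
        have hT : MeasurePreserving (fun p : X × K => (p.1, p.2 * k₀⁻¹)) μ μ :=
          (MeasurePreserving.id μX).prod (measurePreserving_mul_right μK k₀⁻¹)
        have hpt : ∀ p : X × K, D (p, k₀)
            ≤ (‖h p - g p‖₊ : ℝ≥0∞) + ‖g p - g (p.1, p.2 * k₀⁻¹)‖₊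
              + ‖g (p.1, p.2 * k₀⁻¹) - h (p.1, p.2 * k₀⁻¹)‖₊ := by
          intro p
          have : h p - h (p.1, p.2 * k₀⁻¹)
              = (h p - g p) + (g p - g (p.1, p.2 * k₀⁻¹))
                + (g (p.1, p.2 * k₀⁻¹) - h (p.1, p.2 * k₀⁻¹)) := by ring
          rw [hD_def]
          simp only []
          rw [this]
          exact_mod_cast ENNReal.coe_le_coe.2
            ((nnnorm_add_le _ _).trans (add_le_add_left (nnnorm_add_le _ _) _))
        have hmid : ∫⁻ p, (‖g p - g (p.1, p.2 * k₀⁻¹)‖₊ : ℝ≥0∞) ∂μ = 0 := by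
          have : (fun p : X × K => (‖g p - g (p.1, p.2 * k₀⁻¹)‖₊ : ℝ≥0∞)) =ᵐ[μ] 0 := by
            filter_upwards [hinv' k₀] with p hp
            simp [hp]
          rw [lintegral_congr_ae this]
          simp
        have hthird : ∫⁻ p, (‖g (p.1, p.2 * k₀⁻¹) - h (p.1, p.2 * k₀⁻¹)‖₊ : ℝ≥0∞) ∂μ
            = δ := by
          rw [hδ_def]
          exact hT.lintegral_comp (hgm.sub hm).nnnorm.coe_nnreal_ennreal
        have hfirst : ∫⁻ p, (‖h p - g p‖₊ : ℝ≥0∞) ∂μ = δ := by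
          rw [hδ_def]
          congr 1
          funext p
          rw [← nnnorm_neg, neg_sub]
        calc ∫⁻ p, D (p, k₀) ∂μ
            ≤ ∫⁻ p, ((‖h p - g p‖₊ : ℝ≥0∞) + ‖g p - g (p.1, p.2 * k₀⁻¹)‖₊
              + ‖g (p.1, p.2 * k₀⁻¹) - h (p.1, p.2 * k₀⁻¹)‖₊) ∂μ := lintegral_mono hpt
          _ = ∫⁻ p, ((‖h p - g p‖₊ : ℝ≥0∞) + ‖g p - g (p.1, p.2 * k₀⁻¹)‖₊) ∂μ
              + ∫⁻ p, (‖g (p.1, p.2 * k₀⁻¹) - h (p.1, p.2 * k₀⁻¹)‖₊ : ℝ≥0∞) ∂μ := by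
              refine lintegral_add_right _ ?_
              exact ((hgm.comp ((measurable_fst).prodMk
                ((measurable_snd).mul_const k₀⁻¹))).sub
                (hm.comp ((measurable_fst).prodMk
                ((measurable_snd).mul_const k₀⁻¹)))).nnnorm.coe_nnreal_ennreal
          _ = (∫⁻ p, (‖h p - g p‖₊ : ℝ≥0∞) ∂μ
              + ∫⁻ p, (‖g p - g (p.1, p.2 * k₀⁻¹)‖₊ : ℝ≥0∞) ∂μ)
              + ∫⁻ p, (‖g (p.1, p.2 * k₀⁻¹) - h (p.1, p.2 * k₀⁻¹)‖₊ : ℝ≥0∞) ∂μ := by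
              congr 1
              exact lintegral_add_left ((hm.sub hgm).nnnorm.coe_nnreal_ennreal) _
          _ = (δ + 0) + δ := by rw [hmid, hthird, hfirst]
          _ = 2 * δ := by ring
      calc ∫⁻ p, ‖h p - Gh p.1‖₊ ∂μ
          ≤ ∫⁻ p, ∫⁻ k₀, D (p, k₀) ∂μK ∂μ := hstep1
        _ = ∫⁻ k₀, ∫⁻ p, D (p, k₀) ∂μ ∂μK := hswap
        _ ≤ ∫⁻ _, 2 * δ ∂μK := lintegral_mono fun k₀ => hinner k₀
        _ = 2 * δ := by simp
    -- T3 bound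
    have hT3 : ∫⁻ p, ‖Gh p.1 - G p.1‖₊ ∂μ ≤ δ := by
      have h1 : ∫⁻ p, (‖Gh p.1 - G p.1‖₊ : ℝ≥0∞) ∂μ
          = ∫⁻ x, (‖Gh x - G x‖₊ : ℝ≥0∞) ∂μX :=
        hfstMP.lintegral_comp (hGhsm.measurable.sub hGsm.measurable).nnnorm.coe_nnreal_ennreal
      have h2 : ∀ᵐ x ∂μX, (‖Gh x - G x‖₊ : ℝ≥0∞)
          ≤ ∫⁻ k, ‖g (x, k) - h (x, k)‖₊ ∂μK := by
        filter_upwards [hgi.prod_right_ae] with x hx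
        have hhi : Integrable (fun k => h (x, k)) μK :=
          (integrable_const Cb).mono'
            (hcont x).measurable.aestronglyMeasurable
            (Filter.Eventually.of_forall fun k => hCb _)
        have : Gh x - G x = ∫ k, (h (x, k) - g (x, k)) ∂μK := by
          rw [integral_sub hhi hx]
        rw [this]
        refine (enorm_integral_le_lintegral_enorm _).trans ?_
        refine lintegral_mono fun k => ?_
        rw [← nnnorm_neg, neg_sub]
        exact le_rfl
      have h3 : ∫⁻ x, ∫⁻ k, (‖g (x, k) - h (x, k)‖₊ : ℝ≥0∞) ∂μK ∂μX = δ := by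
        rw [hδ_def, hμdef, lintegral_prod _ ((show Measurable fun p => g p - h p from hgm.sub hm).nnnorm.coe_nnreal_ennreal).aemeasurable]
      rw [h1, ← h3]
      exact lintegral_mono_ae h2
    -- triangle
    have htr : Z ≤ δ + (∫⁻ p, ‖h p - Gh p.1‖₊ ∂μ) + ∫⁻ p, ‖Gh p.1 - G p.1‖₊ ∂μ := by
      have hpt : ∀ p : X × K, (‖g p - G p.1‖₊ : ℝ≥0∞)
          ≤ (‖g p - h p‖₊ : ℝ≥0∞) + ‖h p - Gh p.1‖₊ + ‖Gh p.1 - G p.1‖₊ := by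
        intro p
        have : g p - G p.1 = (g p - h p) + (h p - Gh p.1) + (Gh p.1 - G p.1) := by ring
        rw [this]
        exact_mod_cast ENNReal.coe_le_coe.2
          ((nnnorm_add_le _ _).trans (add_le_add_left (nnnorm_add_le _ _) _))
      have hGhm : Measurable fun p : X × K => Gh p.1 :=
        hGhsm.measurable.comp measurable_fst
      calc Z ≤ ∫⁻ p, ((‖g p - h p‖₊ : ℝ≥0∞) + ‖h p - Gh p.1‖₊ + ‖Gh p.1 - G p.1‖₊) ∂μ :=
            lintegral_mono hpt
        _ = ∫⁻ p, ((‖g p - h p‖₊ : ℝ≥0∞) + ‖h p - Gh p.1‖₊) ∂μ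
            + ∫⁻ p, (‖Gh p.1 - G p.1‖₊ : ℝ≥0∞) ∂μ :=
            lintegral_add_right _ ((hGhm.sub hGm).nnnorm.coe_nnreal_ennreal)
        _ = δ + (∫⁻ p, ‖h p - Gh p.1‖₊ ∂μ) + ∫⁻ p, ‖Gh p.1 - G p.1‖₊ ∂μ := by
            rw [lintegral_add_left ((show Measurable fun p => g p - h p from hgm.sub hm).nnnorm.coe_nnreal_ennreal)]
    calc Z ≤ δ + (∫⁻ p, ‖h p - Gh p.1‖₊ ∂μ) + ∫⁻ p, ‖Gh p.1 - G p.1‖₊ ∂μ := htr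
      _ ≤ ε + 2 * ε + ε :=
          add_le_add (add_le_add herr (hT2.trans (mul_le_mul_right herr 2)))
            (hT3.trans herr)
      _ = 4 * ε := by ring
  -- conclude Z = 0
  have hZle' : ∀ ε : ℝ≥0∞, ε ≠ 0 → Z ≤ ε := by
    intro ε hε
    have h4 : (ε / 4 : ℝ≥0∞) ≠ 0 := (ENNReal.div_pos hε (by norm_num)).ne'
    exact (hZle (ε / 4) h4).trans ENNReal.mul_div_le
  have hZ0 : Z = 0 := by
    by_contra hne
    have hfin : Z ≠ ⊤ :=
      ne_top_of_le_ne_top (by norm_num : (1 : ℝ≥0∞) ≠ ⊤) (hZle' 1 one_ne_zero)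
    have hhalf := hZle' (Z / 2) (ENNReal.half_pos hne).ne'
    exact absurd hhalf (not_le.2 (ENNReal.half_lt_self hne hfin))
  -- from Z = 0 to a.e. equality
  have hae : ∀ᵐ p ∂μ, g p = G p.1 := by
    have hmeas : Measurable fun p : X × K => (‖g p - G p.1‖₊ : ℝ≥0∞) :=
      (hgm.sub hGm).nnnorm.coe_nnreal_ennreal
    have := (lintegral_eq_zero_iff hmeas).1 hZ0
    filter_upwards [this] with p hp
    have : ‖g p - G p.1‖₊ = 0 := by
      simpa using hp
    have h2 : g p - G p.1 = 0 := by simpa using this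
    exact sub_eq_zero.1 h2
  -- fiberwise integrals of f and g agree a.e.
  have hslice : ∀ᵐ x ∂μX, (fun k => f (x, k)) =ᵐ[μK] fun k => g (x, k) :=
    Measure.ae_ae_of_ae_prod hfg
  have hslice' : ∀ᵐ x ∂μX, ∫ k', f (x, k') ∂μK = G x := by
    filter_upwards [hslice] with x hx
    exact integral_congr_ae hx
  have hfst : ∀ᵐ p ∂μ, ∫ k', f (p.1, k') ∂μK = G p.1 :=
    hfstMP.quasiMeasurePreserving.ae hslice'
  filter_upwards [hfg, hae, hfst] with p h1 h2 h3
  rw [h1, h2, ← h3]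
end

section
/- Let $X$ be a compact Hausdorff space, $K$ a compact Hausdorff group acting continuously on $X$ (on the right), and let $\pi : X \to Y$ be a continuous surjection onto a compact Hausdorff space $Y$ whose fibers are unions of $K$-orbits, with the property that every $K$-invariant continuous function on $X$ factors through $\pi$. Suppose $s : Y \to X$ is a continuous section of $\pi$ (i.e., $\pi \circ s = \mathrm{id}_Y$). Then for every $y \in Y$, the orbit $\{s(y) \cdot k : k \in K\}$ equals the whole fiber $\pi^{-1}(y)$; i.e., $K$ acts transitively on each fiber of $\pi$. -/
/-- let a compact Hausdorff group `K` act continuously (on the right) on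
a compact Hausdorff space `X`, let `π : X → Y` be a continuous surjection constant on
`K`-orbits such that every `K`-invariant continuous function factors through `π`, and
let `s` be a continuous section of `π`. Then `K` acts transitively on each fiber:
the orbit of `s(y)` is the whole fiber `π⁻¹(y)`. -/
theorem stmt_16 {X Y K : Type*}
    [TopologicalSpace X] [CompactSpace X] [T2Space X]
    [TopologicalSpace Y] [CompactSpace Y] [T2Space Y]
    [Group K] [TopologicalSpace K] [IsTopologicalGroup K] [CompactSpace K] [T2Space K]
    (act : X → K → X)
    (hact1 : ∀ x : X, act x 1 = x)
    (hactmul : ∀ (x : X) (k k' : K), act (act x k) k' = act x (k * k'))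
    (hactcont : Continuous fun p : X × K => act p.1 p.2)
    (π : C(X, Y)) (hπsurj : Function.Surjective π)
    (hfib : ∀ (x : X) (k : K), π (act x k) = π x)
    (hfactor : ∀ f : C(X, ℝ), (∀ (x : X) (k : K), f (act x k) = f x) →
      ∃ g : C(Y, ℝ), ∀ x : X, f x = g (π x))
    (s : C(Y, X)) (hs : ∀ y : Y, π (s y) = y) :
    ∀ (y : Y) (x : X), π x = y → ∃ k : K, act (s y) k = x := by
  -- Turn the right action into a left `MulAction` of `K` on `X`.
  letI : MulAction K X :=
    { smul := fun k x => act x k⁻¹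
      one_smul := fun x => by show act x 1⁻¹ = x; simpa using hact1 x
      mul_smul := fun k k' x => by
        show act x (k * k')⁻¹ = act (act x k'⁻¹) k⁻¹
        rw [hactmul, mul_inv_rev] }
  have hsmul_def : ∀ (k : K) (x : X), k • x = act x k⁻¹ := fun _ _ => rfl
  -- The action is proper since everything is compact Hausdorff.
  haveI : ProperSMul K X := by
    refine ⟨Continuous.isProperMap ?_⟩
    have h1 : Continuous fun gx : K × X => act gx.2 gx.1⁻¹ :=
      hactcont.comp (continuous_snd.prodMk (continuous_inv.comp continuous_fst))
    exact h1.prodMk continuous_snd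
  haveI : T2Space (Quotient (MulAction.orbitRel K X)) :=
    t2Space_quotient_mulAction_of_properSMul
  intro y x hx
  by_contra h
  push_neg at h
  set Q := Quotient (MulAction.orbitRel K X) with hQ
  let q : X → Q := Quotient.mk''
  have hqcont : Continuous q := continuous_quotient_mk'
  -- `q x ≠ q (s y)` since `x` is not in the orbit of `s y`.
  have hne : q x ≠ q (s y) := by
    intro he
    rw [Quotient.eq''] at he
    obtain ⟨k, hk⟩ := he
    exact h k⁻¹ hk
  -- Urysohn on the compact Hausdorff quotient.
  obtain ⟨g, hg0, hg1, -⟩ :=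
    exists_continuous_zero_one_of_isClosed (isClosed_singleton (x := q x))
      (isClosed_singleton (x := q (s y)))
      (by simpa [Set.disjoint_singleton] using hne)
  let f : C(X, ℝ) := g.comp ⟨q, hqcont⟩
  have hinv : ∀ (x' : X) (k : K), f (act x' k) = f x' := by
    intro x' k
    have : q (act x' k) = q x' := by
      refine Quotient.sound' ?_
      refine ⟨k⁻¹, ?_⟩
      show act x' k⁻¹⁻¹ = act x' k
      rw [inv_inv]
    simp only [f, ContinuousMap.comp_apply, ContinuousMap.coe_mk, this]
  obtain ⟨G, hG⟩ := hfactor f hinv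
  have h0 : f x = 0 := hg0 rfl
  have h1 : f (s y) = 1 := hg1 rfl
  have : f x = f (s y) := by rw [hG, hG, hs, hx]
  rw [h0, h1] at this
  exact zero_ne_one this
end
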